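/- Let A be a noetherian unique factorization domain of Krull dimension 2. Then for every non-maximal prime ideal P of A, the A-module (A/P)^2 is not isomorphic to a subquotient of A, i.e. (A/P)^2 does not embed as an A-submodule into any quotient ring A/I. -/

import Mathlib

/-- Let `A` be a noetherian unique factorization domain of Krull dimension 2.  Then for
every non-maximal prime ideal `P` of `A`, the `A`-module `(A/P)²` is not isomorphic to a
subquotient of `A`, i.e. `(A/P)²` does not embed `A`-linearly into any quotient `A ⧸ I`. -/
theorem square_not_subquotient_of_ufd_dim_two
    (A : Type u) [CommRing A] [IsDomain A] [IsNoetherianRing A]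
    [UniqueFactorizationMonoid A]
    (hdim : ringKrullDim A = 2)
    (P : Ideal A) (hP : P.IsPrime) (hPmax : ¬ P.IsMaximal) :
    ∀ I : Ideal A, ¬ ∃ f : ((A ⧸ P) × (A ⧸ P)) →ₗ[A] A ⧸ I, Function.Injective f := by
  rintro I ⟨f, hf⟩
  classical
  obtain ⟨a, ha⟩ := Ideal.Quotient.mk_surjective (f (1, 0))
  obtain ⟨b, hb⟩ := Ideal.Quotient.mk_surjective (f (0, 1))
  have hsmul : ∀ (r c : A), r • (Ideal.Quotient.mk I c) = Ideal.Quotient.mk I (r * c) := by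
    intro r c; rfl
  have hsmulP : ∀ (r : A), r • ((1 : A ⧸ P)) = Ideal.Quotient.mk P r := by
    intro r
    show r • (Ideal.Quotient.mk P 1) = _
    rw [show r • (Ideal.Quotient.mk P 1) = Ideal.Quotient.mk P (r * 1) from rfl, mul_one]
  -- key independence property
  have key : ∀ r s : A, r * a - s * b ∈ I → r ∈ P ∧ s ∈ P := by
    intro r s h
    have h1 : f (r • ((1 : A ⧸ P), (0 : A ⧸ P)) - s • (0, 1)) = 0 := by
      rw [map_sub, map_smul, map_smul, ← ha, ← hb, hsmul, hsmul, ← map_sub,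
        Ideal.Quotient.eq_zero_iff_mem]
      exact h
    have h2 : (r • ((1 : A ⧸ P), (0 : A ⧸ P)) - s • ((0 : A ⧸ P), (1 : A ⧸ P))) = 0 := by
      apply hf; rw [h1, map_zero]
    have hfst := congrArg Prod.fst h2
    have hsnd := congrArg Prod.snd h2
    simp only [Prod.smul_mk, Prod.fst_sub, Prod.snd_sub, smul_zero, sub_zero, zero_sub,
      Prod.fst_zero, Prod.snd_zero, neg_eq_zero] at hfst hsnd
    rw [hsmulP, Ideal.Quotient.eq_zero_iff_mem] at hfst hsnd
    exact ⟨hfst, hsnd⟩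
  have hIa : ∀ r : A, r * a ∈ I → r ∈ P := by
    intro r h
    exact (key r 0 (by simpa using h)).1
  have hIb : ∀ r : A, r * b ∈ I → r ∈ P := by
    intro r h
    have := (key 0 (-r) (by simpa using h)).2
    simpa using P.neg_mem this
  have haI : ∀ r : A, r ∈ P → r * a ∈ I := by
    intro r hr
    have h0 : r • ((1 : A ⧸ P), (0 : A ⧸ P)) = 0 := by
      rw [Prod.smul_mk, smul_zero, hsmulP, Ideal.Quotient.eq_zero_iff_mem.2 hr]
      rfl
    have := congrArg f h0
    rw [map_smul, ← ha, map_zero, hsmul, Ideal.Quotient.eq_zero_iff_mem] at this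
    exact this
  have hbI : ∀ r : A, r ∈ P → r * b ∈ I := by
    intro r hr
    have h0 : r • ((0 : A ⧸ P), (1 : A ⧸ P)) = 0 := by
      rw [Prod.smul_mk, smul_zero, hsmulP, Ideal.Quotient.eq_zero_iff_mem.2 hr]
      rfl
    have := congrArg f h0
    rw [map_smul, ← hb, map_zero, hsmul, Ideal.Quotient.eq_zero_iff_mem] at this
    exact this
  -- I ⊆ P
  have hIP : I ≤ P := by
    intro c hc
    exact hIa c (I.mul_mem_right a hc)
  by_cases hP0 : P = ⊥
  · -- P = 0 : then b*a - a*b = 0 ∈ I forces b ∈ P = 0, then 1 * b = 0 ∈ I gives 1 ∈ P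
    have hb0 : b ∈ P := (key b a (by ring_nf; exact I.zero_mem)).1
    rw [hP0, Ideal.mem_bot] at hb0
    have : (1 : A) ∈ P := hIb 1 (by rw [hb0, one_mul]; exact I.zero_mem)
    exact hP.ne_top (Ideal.eq_top_of_isUnit_mem _ this isUnit_one)
  · -- P ≠ 0 : get a prime element p with P = (p)
    obtain ⟨q, hqP, hq0⟩ := Submodule.exists_mem_ne_zero_of_ne_bot hP0
    obtain ⟨fs, hfs, u, hu⟩ := UniqueFactorizationMonoid.exists_prime_factors q hq0
    have huP : (u : A) ∉ P := fun h => hP.ne_top (Ideal.eq_top_of_isUnit_mem _ h u.isUnit)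
    have hprodP : fs.prod ∈ P := by
      have hmem : (fs.prod * u : A) ∈ P := hu ▸ hqP
      exact (hP.mem_or_mem hmem).resolve_right huP
    obtain ⟨p, hpfs, hpP⟩ := (hP.multiset_prod_mem_iff_exists_mem fs).1 hprodP
    have hp : Prime p := hfs p hpfs
    -- P = (p)
    have hspanP : Ideal.span {p} = P := by
      by_contra hne
      have hlt : Ideal.span {p} < P :=
        lt_of_le_of_ne ((Ideal.span_singleton_le_iff_mem P).2 hpP) hne
      obtain ⟨m, hm, hPm⟩ := Ideal.exists_le_maximal P hP.ne_top
      have hPltm : P < m := lt_of_le_of_ne hPm (fun h => hPmax (h ▸ hm))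
      have hbotlt : (⊥ : Ideal A) < Ideal.span {p} := by
        rw [bot_lt_iff_ne_bot, Ne, Ideal.span_singleton_eq_bot]
        exact hp.ne_zero
      have hspanPrime : (Ideal.span {p}).IsPrime := (Ideal.span_singleton_prime hp.ne_zero).2 hp
      -- build a chain of length 3 in the prime spectrum
      let x0 : PrimeSpectrum A := ⟨⊥, Ideal.bot_prime⟩
      let x1 : PrimeSpectrum A := ⟨Ideal.span {p}, hspanPrime⟩
      let x2 : PrimeSpectrum A := ⟨P, hP⟩
      let x3 : PrimeSpectrum A := ⟨m, hm.isPrime⟩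
      have hchain : List.Chain' (· < ·) [x0, x1, x2, x3] := by
        refine List.isChain_cons_cons.2 ⟨?_, List.isChain_cons_cons.2 ⟨?_, List.isChain_cons_cons.2 ⟨?_, ?_⟩⟩⟩
        · exact hbotlt
        · exact hlt
        · exact hPltm
        · exact List.isChain_singleton _
      let c : LTSeries (PrimeSpectrum A) :=
        RelSeries.fromListIsChain [x0, x1, x2, x3] (by simp) hchain
      have hlen : c.length = 3 := by
        simp [c, RelSeries.fromListIsChain]
      have h3 := Order.LTSeries.length_le_krullDim c
      rw [hlen] at h3
      rw [ringKrullDim] at hdim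
      rw [hdim] at h3
      norm_num at h3
    -- now the elementary argument with p
    have hmemP : ∀ r : A, r ∈ P ↔ p ∣ r := by
      intro r; rw [← hspanP, Ideal.mem_span_singleton]
    have hpaI : p * a ∈ I := haI p hpP
    have ha0 : a ≠ 0 := by
      intro h
      have : (1 : A) ∈ P := hIa 1 (by rw [h, mul_zero]; exact I.zero_mem)
      exact hP.ne_top (Ideal.eq_top_of_isUnit_mem _ this isUnit_one)
    have hpa0 : p * a ≠ 0 := mul_ne_zero hp.ne_zero ha0
    -- finiteness of multiplicity gives a bound
    obtain ⟨k, hk⟩ := FiniteMultiplicity.of_prime_left hp hpa0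
    have hbound : ∀ m : ℕ, I ≤ Ideal.span {p ^ m} → m ≤ k := by
      intro m hm
      by_contra hmk
      push_neg at hmk
      have : p ^ m ∣ p * a := Ideal.mem_span_singleton.1 (hm hpaI)
      exact hk (dvd_trans (pow_dvd_pow p hmk) this)
    set Q : ℕ → Prop := fun m => I ≤ Ideal.span {p ^ m} with hQ
    have hQ1 : Q 1 := by
      intro c hc
      rw [Ideal.mem_span_singleton, pow_one, ← hmemP]
      exact hIP hc
    set n := Nat.findGreatest Q k with hn
    have hn1 : 1 ≤ n := Nat.le_findGreatest (hbound 1 hQ1) hQ1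
    have hQn : Q n := Nat.findGreatest_spec (hbound 1 hQ1) hQ1
    have hQn1 : ¬ Q (n + 1) := by
      intro hq
      have := Nat.le_findGreatest (hbound (n+1) hq) hq
      omega
    -- pick c in I not in (p^(n+1))
    rw [hQ] at hQn1
    push_neg at hQn1
    rw [SetLike.not_le_iff_exists] at hQn1
    obtain ⟨c, hcI, hcn⟩ := hQn1
    obtain ⟨d, hd⟩ := Ideal.mem_span_singleton.1 (hQn hcI)
    have hdp : ¬ p ∣ d := by
      intro ⟨d', hd'⟩
      exact hcn (Ideal.mem_span_singleton.2 ⟨d', by rw [hd, hd', pow_succ]; ring⟩)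
    -- a = p^(n-1) * a', b = p^(n-1) * b'
    obtain ⟨a', ha'⟩ := Ideal.mem_span_singleton.1 (hQn hpaI)
    obtain ⟨b', hb'⟩ := Ideal.mem_span_singleton.1 (hQn (hbI p hpP))
    -- cancel one factor of p : a = p^(n-1) * a', b = p^(n-1) * b'
    obtain ⟨n', hnn⟩ : ∃ n', n = n' + 1 := ⟨n - 1, by omega⟩
    rw [hnn] at ha' hb' hd
    have hae : a = p ^ n' * a' := by
      have : p * a = p * (p ^ n' * a') := by rw [ha', pow_succ]; ring
      exact mul_left_cancel₀ hp.ne_zero this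
    have hbe : b = p ^ n' * b' := by
      have : p * b = p * (p ^ n' * b') := by rw [hb', pow_succ]; ring
      exact mul_left_cancel₀ hp.ne_zero this
    -- a' and b' are not divisible by p
    have ha'p : ¬ p ∣ a' := by
      rintro ⟨a1, rfl⟩
      have hda : d * a ∈ I := by
        have : d * a = c * a1 := by rw [hae, hd, pow_succ]; ring
        rw [this]
        exact I.mul_mem_right a1 hcI
      exact hdp ((hmemP d).1 (hIa d hda))
    have hb'p : ¬ p ∣ b' := by
      rintro ⟨b1, rfl⟩
      have hdb : d * b ∈ I := by
        have : d * b = c * b1 := by rw [hbe, hd, pow_succ]; ring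
        rw [this]
        exact I.mul_mem_right b1 hcI
      exact hdp ((hmemP d).1 (hIb d hdb))
    -- final contradiction
    have : b' * a - a' * b ∈ I := by
      have : b' * a - a' * b = 0 := by rw [hae, hbe]; ring
      rw [this]; exact I.zero_mem
    exact hb'p ((hmemP b').1 (key b' a' this).1)
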